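/- The graph Φ_{95}(4, 7, 16, 27, 38, 52, 62, 81) is a bipartite, 11-regular, vertex-transitive graph of order 190 and diameter 3. -/

import Mathlib

open scoped Classical

/-- The graph `Φ_m(a_1,…,a_k)`: vertices `x_i = (false, i)`, `y_i = (true, i)`
for `i ∈ ZMod m`, with edges `x_i ∼ y_i`, `x_i ∼ y_{i+1}`, `x_i ∼ y_{i-1}` and
`x_i ∼ y_{i+a_j}` for each `j`. -/
def PhiGen (m : ℕ) {k : ℕ} (a : Fin k → ℕ) : SimpleGraph (Bool × ZMod m) :=
  SimpleGraph.fromRel (fun u v => u.1 = false ∧ v.1 = true ∧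
    (v.2 = u.2 ∨ v.2 = u.2 + 1 ∨ v.2 = u.2 - 1 ∨ ∃ t, v.2 = u.2 + (a t : ZMod m)))

/-- The graph `Φ_95(4,7,16,27,38,52,62,81)`. -/
def G190 : SimpleGraph (Bool × ZMod 95) :=
  PhiGen 95 ![4, 7, 16, 27, 38, 52, 62, 81]

def SF : Finset (ZMod 95) := {0, 1, -1, 4, 7, 16, 27, 38, 52, 62, 81}

set_option maxRecDepth 100000 in
lemma SFcard : SF.card = 11 := by decide

set_option maxRecDepth 100000 in
set_option maxHeartbeats 1000000 in
lemma cover : ∀ d : ZMod 95, ∃ s ∈ SF, ∃ s' ∈ SF, d = s - s' := by decide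

set_option maxHeartbeats 1000000 in
lemma helper (x y : ZMod 95) :
    ((y = x ∨ y = x + 1 ∨ y = x - 1 ∨
      ∃ t : Fin 8, y = x + (((![4,7,16,27,38,52,62,81] : Fin 8 → ℕ) t : ZMod 95))) ↔
     (y - x) ∈ SF) := by
  have e : ∀ c : ZMod 95, (y - x = c ↔ y = x + c) := by
    intro c; rw [sub_eq_iff_eq_add']
  simp only [SF, Finset.mem_insert, Finset.mem_singleton, e, Fin.exists_fin_succ,
    Matrix.cons_val_zero, Matrix.cons_val_succ, Fin.exists_fin_zero_pi]
  simp only [sub_eq_add_neg x 1]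
  norm_num

lemma adj_iff (u v : Bool × ZMod 95) :
    G190.Adj u v ↔ ((u.1 = false ∧ v.1 = true ∧ (v.2 - u.2) ∈ SF) ∨
      (v.1 = false ∧ u.1 = true ∧ (u.2 - v.2) ∈ SF)) := by
  show (SimpleGraph.fromRel _).Adj u v ↔ _
  rw [SimpleGraph.fromRel_adj]
  constructor
  · rintro ⟨hne, h | h⟩
    · exact Or.inl ⟨h.1, h.2.1, (helper u.2 v.2).1 h.2.2⟩
    · exact Or.inr ⟨h.1, h.2.1, (helper v.2 u.2).1 h.2.2⟩
  · rintro (⟨h1, h2, h3⟩ | ⟨h1, h2, h3⟩)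
    · exact ⟨fun he => by subst he; rw [h1] at h2; exact Bool.noConfusion h2,
        Or.inl ⟨h1, h2, (helper u.2 v.2).2 h3⟩⟩
    · exact ⟨fun he => by subst he; rw [h1] at h2; exact Bool.noConfusion h2,
        Or.inr ⟨h1, h2, (helper v.2 u.2).2 h3⟩⟩

lemma adj_fst {u v : Bool × ZMod 95} (h : G190.Adj u v) : u.1 ≠ v.1 := by
  rcases (adj_iff u v).1 h with ⟨h1, h2, _⟩ | ⟨h1, h2, _⟩ <;> rw [h1, h2] <;> simp

lemma adjS (i s : ZMod 95) (hs : s ∈ SF) : G190.Adj (false, i) (true, i + s) :=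
  (adj_iff _ _).2 (Or.inl ⟨rfl, rfl, by simpa using hs⟩)

lemma walk_parity {a b : Bool × ZMod 95} (p : G190.Walk a b) :
    a.1 = b.1 ↔ Even p.length := by
  induction p with
  | nil => simp
  | @cons a m b h q ih =>
    have hf := adj_fst h
    simp only [SimpleGraph.Walk.length_cons, Nat.even_add_one, ← ih]
    revert hf
    cases a.1 <;> cases m.1 <;> cases b.1 <;> simp

lemma walk_xy (i j : ZMod 95) :
    ∃ p : G190.Walk ((false, i) : Bool × ZMod 95) (true, j), p.length = 3 := by
  obtain ⟨s, hs, s', hs', hd⟩ := cover (j - i)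
  have e1 : G190.Adj (false, i) (true, i + s) := adjS i s hs
  have e2 : G190.Adj (false, j) (true, i + s) := by
    have h := adjS j s' hs'
    rwa [show j + s' = i + s by linear_combination hd] at h
  have e3 : G190.Adj (false, j) (true, j) := by
    have h := adjS j 0 (by decide)
    rwa [add_zero] at h
  exact ⟨.cons e1 (.cons e2.symm (.cons e3 .nil)), rfl⟩

lemma walk_xx (i j : ZMod 95) :
    ∃ p : G190.Walk ((false, i) : Bool × ZMod 95) (false, j), p.length = 2 := by
  obtain ⟨s, hs, s', hs', hd⟩ := cover (i - j)
  have e1 : G190.Adj (false, i) (true, i + s') := adjS i s' hs'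
  have e2 : G190.Adj (false, j) (true, i + s') := by
    have h := adjS j s hs
    rwa [show j + s = i + s' by linear_combination -hd] at h
  exact ⟨.cons e1 (.cons e2.symm .nil), rfl⟩

lemma walk_yy (i j : ZMod 95) :
    ∃ p : G190.Walk ((true, i) : Bool × ZMod 95) (true, j), p.length = 2 := by
  obtain ⟨s, hs, s', hs', hd⟩ := cover (i - j)
  have e1 : G190.Adj (false, i - s) (true, i) := by
    have h := adjS (i - s) s hs
    rwa [sub_add_cancel] at h
  have e2 : G190.Adj (false, i - s) (true, j) := by
    have h := adjS (i - s) s' hs'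
    rwa [show i - s + s' = j by linear_combination hd] at h
  exact ⟨.cons e1.symm (.cons e2 .nil), rfl⟩

lemma walk_le3 (u v : Bool × ZMod 95) : ∃ p : G190.Walk u v, p.length ≤ 3 := by
  obtain ⟨a, i⟩ := u
  obtain ⟨b, j⟩ := v
  cases a <;> cases b
  · obtain ⟨p, hp⟩ := walk_xx i j; exact ⟨p, by omega⟩
  · obtain ⟨p, hp⟩ := walk_xy i j; exact ⟨p, by omega⟩
  · obtain ⟨p, hp⟩ := walk_xy j i
    exact ⟨p.reverse, by rw [SimpleGraph.Walk.length_reverse]; omega⟩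
  · obtain ⟨p, hp⟩ := walk_yy i j; exact ⟨p, by omega⟩

def trIso (c : ZMod 95) : G190 ≃g G190 where
  toEquiv := (Equiv.refl Bool).prodCongr (Equiv.addRight c)
  map_rel_iff' := by
    intro a b
    simp only [Equiv.prodCongr_apply, Equiv.coe_refl, Prod.map, id_eq,
      Equiv.coe_addRight, adj_iff, add_sub_add_right_eq_sub]

def flipIso : G190 ≃g G190 where
  toEquiv := Equiv.prodCongr (Function.Involutive.toPerm _ Bool.not_not) (Equiv.neg (ZMod 95))
  map_rel_iff' := by
    intro a b
    simp only [Equiv.prodCongr_apply, Prod.map, Function.Involutive.coe_toPerm,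
      Equiv.neg_apply, adj_iff, neg_sub_neg, Bool.not_eq_false', Bool.not_eq_true']
    simp only [Function.Involutive.toPerm, Equiv.coe_fn_mk, Bool.not_eq_false', Bool.not_eq_true']
    constructor
    · rintro (⟨h1, h2, h3⟩ | ⟨h1, h2, h3⟩)
      · exact Or.inr ⟨h2, h1, h3⟩
      · exact Or.inl ⟨h2, h1, h3⟩
    · rintro (⟨h1, h2, h3⟩ | ⟨h1, h2, h3⟩)
      · exact Or.inr ⟨h2, h1, h3⟩
      · exact Or.inl ⟨h2, h1, h3⟩

lemma transitive (u v : Bool × ZMod 95) : ∃ φ : G190 ≃g G190, φ u = v := by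
  by_cases h : u.1 = v.1
  · refine ⟨trIso (v.2 - u.2), ?_⟩
    show (u.1, u.2 + (v.2 - u.2)) = v
    rw [add_sub_cancel, h]
  · refine ⟨flipIso.trans (trIso (v.2 + u.2)), ?_⟩
    show (!u.1, -u.2 + (v.2 + u.2)) = v
    have hb : (!u.1) = v.1 := by revert h; cases u.1 <;> cases v.1 <;> simp
    rw [hb, show -u.2 + (v.2 + u.2) = v.2 by ring]

lemma nbr_false (i : ZMod 95) :
    G190.neighborFinset (false, i) = SF.image (fun s => ((true, i + s) : Bool × ZMod 95)) := by
  ext ⟨b, z⟩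
  rw [SimpleGraph.mem_neighborFinset, adj_iff]
  simp only [Finset.mem_image, Prod.mk.injEq]
  cases b
  · constructor
    · rintro (⟨_, h2, _⟩ | ⟨_, h2, _⟩) <;> exact Bool.noConfusion h2
    · rintro ⟨s, hs, h, _⟩
      exact Bool.noConfusion h
  · constructor
    · rintro (⟨_, _, h3⟩ | ⟨h1, _, _⟩)
      · exact ⟨z - i, h3, rfl, by ring⟩
      · exact Bool.noConfusion h1
    · rintro ⟨s, hs, _, rfl⟩
      refine Or.inl ⟨by trivial, by trivial, ?_⟩
      rwa [add_sub_cancel_left]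

lemma nbr_true (i : ZMod 95) :
    G190.neighborFinset (true, i) = SF.image (fun s => ((false, i - s) : Bool × ZMod 95)) := by
  ext ⟨b, z⟩
  rw [SimpleGraph.mem_neighborFinset, adj_iff]
  simp only [Finset.mem_image, Prod.mk.injEq]
  cases b
  · constructor
    · rintro (⟨h1, _, _⟩ | ⟨_, _, h3⟩)
      · exact Bool.noConfusion h1
      · exact ⟨i - z, h3, rfl, by ring⟩
    · rintro ⟨s, hs, _, rfl⟩
      refine Or.inr ⟨by trivial, by trivial, ?_⟩
      rwa [sub_sub_cancel]
  · constructor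
    · rintro (⟨h1, _, _⟩ | ⟨h1, _, _⟩) <;> exact Bool.noConfusion h1
    · rintro ⟨s, hs, h, _⟩
      exact Bool.noConfusion h

lemma regular : ∀ v : Bool × ZMod 95, G190.degree v = 11 := by
  rintro ⟨b, i⟩
  cases b
  · unfold SimpleGraph.degree
    rw [nbr_false i, Finset.card_image_of_injective _ (fun a b h => by
      simpa using congrArg Prod.snd h), SFcard]
  · unfold SimpleGraph.degree
    rw [nbr_true i, Finset.card_image_of_injective _ (fun a b h => by
      simpa [sub_right_inj] using congrArg Prod.snd h), SFcard]

/-- `Φ_95(4,7,16,27,38,52,62,81)` is a bipartite, 11-regular, vertex-transitive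
graph of order 190 and diameter 3. -/
theorem stmt13 :
    G190.Colorable 2 ∧
    G190.IsRegularOfDegree 11 ∧
    (∀ u v : Bool × ZMod 95, ∃ φ : G190 ≃g G190, φ u = v) ∧
    Fintype.card (Bool × ZMod 95) = 190 ∧
    G190.Connected ∧ (∀ u v, G190.dist u v ≤ 3) ∧ (∃ u v, G190.dist u v = 3) := by
  have hreach : ∀ u v : Bool × ZMod 95, G190.Reachable u v := fun u v =>
    ⟨(walk_le3 u v).choose⟩
  have hconn : G190.Connected := by
    rw [SimpleGraph.connected_iff]
    exact ⟨hreach, ⟨(false, 0)⟩⟩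
  have hdist : ∀ u v : Bool × ZMod 95, G190.dist u v ≤ 3 := by
    intro u v
    obtain ⟨p, hp⟩ := walk_le3 u v
    exact le_trans (SimpleGraph.dist_le p) hp
  refine ⟨?_, regular, transitive, by rw [Fintype.card_prod, Fintype.card_bool, ZMod.card], hconn, hdist, ?_⟩
  · exact ⟨SimpleGraph.Coloring.mk (fun v => if v.1 then 0 else 1)
      (fun {a b} hab => by
        have h := adj_fst hab
        obtain ⟨x, _⟩ := a
        obtain ⟨y, _⟩ := b
        cases x <;> cases y <;> simp_all)⟩
  · refine ⟨(false, 0), (true, 2), ?_⟩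
    have h3 := hdist (false, 0) (true, 2)
    have hnadj : ¬ G190.Adj (false, 0) (true, 2) := by
      rw [adj_iff]; decide
    obtain ⟨p, hp⟩ := (hreach (false, 0) (true, 2)).exists_walk_length_eq_dist
    have hodd : ¬ Even p.length := by
      rw [← walk_parity p]; simp
    have h1 : p.length ≠ 1 := fun h => hnadj (p.adj_of_length_eq_one h)
    rw [hp] at hodd h1
    rcases Nat.even_or_odd (G190.dist (false, 0) (true, 2)) with h | ⟨k, hk⟩
    · exact absurd h hodd
    · omega
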